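/- Suppose Ω ⊂ ℙ(ℝ^d) is a properly convex domain, (x_n) is a sequence in Ω with x_n → x ∈ cl(Ω), (y_n) is a sequence in Ω with y_n → y ∈ cl(Ω), and liminf_{n→∞} H_Ω(x_n, y_n) < +∞. Then y ∈ F_Ω(x) and H_{F_Ω(x)}(x,y) ≤ liminf_{n→∞} H_Ω(x_n, y_n). -/

import Mathlib

open scoped LinearAlgebra.Projectivization Pointwise
open Projectivization Matrix

namespace CCProj

abbrev PSp (d : ℕ) := ℙ ℝ (Fin d → ℝ)

noncomputable instance (d : ℕ) : TopologicalSpace (PSp d) :=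
  inferInstanceAs (TopologicalSpace (Quotient (projectivizationSetoid ℝ (Fin d → ℝ))))

variable {d : ℕ}

noncomputable def glEquivHom (d : ℕ) :
    GL (Fin d) ℝ →* ((Fin d → ℝ) ≃ₗ[ℝ] (Fin d → ℝ)) :=
  (Matrix.GeneralLinearGroup.toLin.trans
    (LinearMap.GeneralLinearGroup.generalLinearEquiv ℝ (Fin d → ℝ))).toMonoidHom

noncomputable def projPerm (e : (Fin d → ℝ) ≃ₗ[ℝ] (Fin d → ℝ)) : Equiv.Perm (PSp d) where
  toFun := Projectivization.map e.toLinearMap e.injective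
  invFun := Projectivization.map e.symm.toLinearMap e.symm.injective
  left_inv x := by
    induction x using Projectivization.ind with
    | h v hv => simp [Projectivization.map_mk]
  right_inv x := by
    induction x using Projectivization.ind with
    | h v hv => simp [Projectivization.map_mk]

noncomputable def glToPerm (d : ℕ) : GL (Fin d) ℝ →* Equiv.Perm (PSp d) where
  toFun g := projPerm (glEquivHom d g)
  map_one' := by
    ext x
    induction x using Projectivization.ind with
    | h v hv => simp [projPerm, Projectivization.map_mk]
  map_mul' g h := by
    ext x
    induction x using Projectivization.ind with
    | h v hv => simp [projPerm, Projectivization.map_mk]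

abbrev PGL (d : ℕ) := GL (Fin d) ℝ ⧸ (glToPerm d).ker

noncomputable def pglPerm (d : ℕ) : PGL d →* Equiv.Perm (PSp d) :=
  QuotientGroup.lift _ (glToPerm d) (fun _ hg => hg)

noncomputable instance : MulAction (PGL d) (PSp d) :=
  MulAction.compHom _ (pglPerm d)

/-! ### Convexity in projective space -/

/-- The affine chart associated to a linear functional `f`: a projective point `x` with
`f(x.rep) ≠ 0` is sent to the unique representative `v` of `x` with `f v = 1`. -/
noncomputable def chartMap (f : (Fin d → ℝ) →ₗ[ℝ] ℝ) (x : PSp d) : Fin d → ℝ :=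
  (f x.rep)⁻¹ • x.rep

/-- A set `C ⊆ ℙ(ℝ^d)` is convex if it lies in some affine chart and is convex there. -/
def IsConvexSet (C : Set (PSp d)) : Prop :=
  ∃ f : (Fin d → ℝ) →ₗ[ℝ] ℝ, (∀ x ∈ C, f x.rep ≠ 0) ∧ Convex ℝ (chartMap f '' C)

/-- A set `C ⊆ ℙ(ℝ^d)` is properly convex if it lies in some affine chart and is
convex and bounded there. -/
def IsProperlyConvexSet (C : Set (PSp d)) : Prop :=
  ∃ f : (Fin d → ℝ) →ₗ[ℝ] ℝ, (∀ x ∈ C, f x.rep ≠ 0) ∧ Convex ℝ (chartMap f '' C) ∧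
    Bornology.IsBounded (chartMap f '' C)

/-- A properly convex domain: a non-empty open properly convex subset of `ℙ(ℝ^d)`. -/
def IsProperlyConvexDomain (Ω : Set (PSp d)) : Prop :=
  IsOpen Ω ∧ Ω.Nonempty ∧ IsProperlyConvexSet Ω

/-- The projectivization of a linear subspace `W ⊆ ℝ^d`, as a subset of `ℙ(ℝ^d)`. -/
def Pb (W : Submodule ℝ (Fin d → ℝ)) : Set (PSp d) := {x | x.rep ∈ W}

/-- The linear span of (the lines representing) a subset of `ℙ(ℝ^d)`. -/
def projSpan (C : Set (PSp d)) : Submodule ℝ (Fin d → ℝ) :=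
  Submodule.span ℝ {v | ∃ x ∈ C, v = Projectivization.rep x}

/-- `C` is open in its span, i.e. equal to its relative interior. -/
def OpenInSpan (C : Set (PSp d)) : Prop :=
  ∃ U : Set (PSp d), IsOpen U ∧ C = U ∩ Pb (projSpan C)

/-! ### The Hilbert metric -/

/-- The set of "cross-ratio" values used to define the Hilbert distance on a properly
convex set `C` which is open in its span: for linear functionals `f, g` which do not
vanish on (the cone over) `C`, one takes `f(ξ)g(η)/(f(η)g(ξ))` where `ξ, η` are
representatives of `x, y`.  (This quantity is independent of the choice of
representatives.)  For such a set `C`, the supremum of this set is exactly the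
cross-ratio `[a,x,y,b]` of the classical definition of the Hilbert distance, where
`a, x, y, b` are aligned in this order on the projective line through `x` and `y`,
with `a, b ∈ ∂C`. -/
def crossSet (C : Set (PSp d)) (x y : PSp d) : Set ℝ :=
  {r | ∃ f g : (Fin d → ℝ) →ₗ[ℝ] ℝ, (∀ z ∈ C, f z.rep ≠ 0) ∧ (∀ z ∈ C, g z.rep ≠ 0) ∧
      r = (f x.rep * g y.rep) / (f y.rep * g x.rep)}

/-- The Hilbert distance on a properly convex set `C ⊆ ℙ(ℝ^d)` which is open in its
span: `H_C(x,y) = (1/2) log [a,x,y,b]`. -/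
noncomputable def hilbertDist (C : Set (PSp d)) (x y : PSp d) : ℝ :=
  (1 / 2) * Real.log (sSup (crossSet C x y))

/-- The distance from a point to a set, for the Hilbert metric on `C`. -/
noncomputable def hilbertDistToSet (C : Set (PSp d)) (x : PSp d) (D : Set (PSp d)) : ℝ :=
  sInf {s | ∃ y ∈ D, s = hilbertDist C x y}

/-- The Hausdorff distance between two subsets of `C`, for the Hilbert metric on `C`. -/
noncomputable def hilbertHausDist (C : Set (PSp d)) (A B : Set (PSp d)) : ℝ :=
  max (sSup {r | ∃ a ∈ A, r = hilbertDistToSet C a B})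
      (sSup {r | ∃ b ∈ B, r = hilbertDistToSet C b A})

/-- The minimal translation length `τ_C(g) = inf_{x ∈ C} H_C(x, gx)`. -/
noncomputable def transLength (C : Set (PSp d)) (g : PGL d) : ℝ :=
  sInf ((fun x => hilbertDist C x (g • x)) '' C)

/-- The minimal translation set `Min(g) = {x ∈ Ω : H_Ω(x,gx) = τ_Ω(g)}`. -/
noncomputable def minSet (Ω : Set (PSp d)) (g : PGL d) : Set (PSp d) :=
  {x ∈ Ω | hilbertDist Ω x (g • x) = transLength Ω g}

/-! ### Automorphisms, cocompact actions -/

/-- The automorphism group `Aut(Ω) = {g ∈ PGL(d,ℝ) : gΩ = Ω}`. -/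
noncomputable def aut (Ω : Set (PSp d)) : Subgroup (PGL d) := MulAction.stabilizer (PGL d) Ω

/-- A collection `G` of elements of `PGL(d,ℝ)` acts co-compactly on `X ⊆ ℙ(ℝ^d)` if
there is a compact `K ⊆ X` with `⋃_{g ∈ G} gK = X`. -/
def ActsCocompactlyOn (G : Set (PGL d)) (X : Set (PSp d)) : Prop :=
  ∃ K : Set (PSp d), K ⊆ X ∧ IsCompact K ∧ (⋃ g ∈ G, g • K) = X

/-- A naive convex co-compact triple `(Ω, 𝒞, Λ)`. -/
structure IsNCCTriple (Ω 𝒞 : Set (PSp d)) (Λ : Subgroup (PGL d)) : Prop where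
  dom : IsProperlyConvexDomain Ω
  lambda_le : Λ ≤ aut Ω
  lambda_inf : (Λ : Set (PGL d)).Infinite
  lambda_disc : DiscreteTopology Λ
  C_nonempty : 𝒞.Nonempty
  C_sub : 𝒞 ⊆ Ω
  C_convex : IsConvexSet 𝒞
  C_closed : closure 𝒞 ∩ Ω ⊆ 𝒞   -- `𝒞` is closed in `Ω`
  C_inv : ∀ γ ∈ Λ, γ • 𝒞 = 𝒞
  C_cocompact : ActsCocompactlyOn (Λ : Set (PGL d)) 𝒞

/-! ### Segments, convex hulls and faces -/

/-- The smallest convex subset of `cl(C)` containing `X` (the convex hull of `X`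
relative to `C`). -/
def convHull (C : Set (PSp d)) (X : Set (PSp d)) : Set (PSp d) :=
  ⋂₀ {D | IsConvexSet D ∧ D ⊆ closure C ∧ X ⊆ D}

/-- The closed segment `[x,y]` joining two points of `cl(C)` inside `cl(C)`. -/
def closedSeg (C : Set (PSp d)) (x y : PSp d) : Set (PSp d) := convHull C {x, y}

/-- The open segment `(x,y) = [x,y] \ {x,y}`. -/
def openSeg (C : Set (PSp d)) (x y : PSp d) : Set (PSp d) := closedSeg C x y \ {x, y}

/-- The open segment with endpoints `[u]` and `[v]` (for `u, v` linearly independent):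
the projective points `[a•u + b•v]` with `a, b > 0`. -/
def openSegV (u v : Fin d → ℝ) : Set (PSp d) :=
  {z | ∃ a b : ℝ, 0 < a ∧ 0 < b ∧ ∃ h : a • u + b • v ≠ 0, z = Projectivization.mk ℝ (a • u + b • v) h}

/-- The projective line through `[u]` and `[v]`. -/
def projLine (u v : Fin d → ℝ) : Set (PSp d) :=
  {z | ∃ a b : ℝ, ∃ h : a • u + b • v ≠ 0, z = Projectivization.mk ℝ (a • u + b • v) h}

/-- The open face `F_Ω(x)` of a point `x ∈ cl(Ω)`. -/
def face (Ω : Set (PSp d)) (x : PSp d) : Set (PSp d) :=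
  insert x {y ∈ closure Ω | ∃ u v : Fin d → ℝ,
    openSegV u v ⊆ closure Ω ∧ x ∈ openSegV u v ∧ y ∈ openSegV u v}

/-- `A` is properly embedded in `B` if `A ⊆ B` and the inclusion is a proper map. -/
def ProperlyEmbedded (A B : Set (PSp d)) : Prop :=
  ∃ h : A ⊆ B, IsProperMap (Set.inclusion h)

/-! ### Simplices -/

/-- The standard open `(k-1)`-dimensional simplex
`{[x₁ : ⋯ : x_k : 0 : ⋯ : 0] : x₁ > 0, …, x_k > 0} ⊆ ℙ(ℝ^d)`. -/
def stdSimplex (d k : ℕ) : Set (PSp d) :=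
  {x | ∃ (v : Fin d → ℝ) (h : v ≠ 0), x = Projectivization.mk ℝ v h ∧
    ∀ i : Fin d, (((i : ℕ) < k → 0 < v i) ∧ (k ≤ (i : ℕ) → v i = 0))}

/-- The `i`-th standard basis point `[e_i] ∈ ℙ(ℝ^d)`. -/
noncomputable def basisPt (d : ℕ) (i : Fin d) : PSp d :=
  Projectivization.mk ℝ (Pi.single i 1) (by
    intro h
    have := congrFun h i
    simp at this)

/-- The absolute values of the complex eigenvalues of a real matrix. -/
noncomputable def eigAbs (M : Matrix (Fin d) (Fin d) ℝ) : Set ℝ :=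
  (fun z : ℂ => ‖z‖) '' spectrum ℂ (M.map Complex.ofReal)

/-- The operator norm on `End(ℝ^d)` associated to the standard Euclidean norm. -/
noncomputable def eucOpNorm (M : Matrix (Fin d) (Fin d) ℝ) : ℝ :=
  ‖Matrix.toEuclideanCLM (𝕜 := ℝ) M‖

/-- The image of a subset of `ℙ(ℝ^d)` under (the projectivization of) an endomorphism
`T` of `ℝ^d`. -/
def projImage (T : Matrix (Fin d) (Fin d) ℝ) (A : Set (PSp d)) : Set (PSp d) :=
  {y | ∃ (v : Fin d → ℝ) (hv : v ≠ 0), Projectivization.mk ℝ v hv ∈ A ∧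
    ∃ hTv : T *ᵥ v ≠ 0, y = Projectivization.mk ℝ (T *ᵥ v) hTv}


/-! ### Auxiliary lemmas for Proposition 5.2 -/

lemma exists_rep_smul (v : Fin d → ℝ) (hv : v ≠ 0) :
    ∃ c : ℝ, c ≠ 0 ∧ (Projectivization.mk ℝ v hv).rep = c • v := by
  obtain ⟨a, ha⟩ := (Projectivization.mk_eq_mk_iff ℝ _ _ (Projectivization.rep_nonzero _) hv).1
    (Projectivization.mk_rep (Projectivization.mk ℝ v hv))
  exact ⟨a, a.ne_zero, ha.symm⟩

noncomputable def pq (d : ℕ) : {v : Fin d → ℝ // v ≠ 0} → PSp d :=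
  fun v => Projectivization.mk ℝ v.1 v.2

lemma pq_isQuotientMap : Topology.IsQuotientMap (pq d) :=
  (isQuotientMap_quotient_mk' (s := projectivizationSetoid ℝ (Fin d → ℝ)))

lemma continuous_pq : Continuous (pq d) := pq_isQuotientMap.continuous

lemma continuous_mk_comp {X : Type*} [TopologicalSpace X] (w : X → (Fin d → ℝ))
    (hw : Continuous w) (h : ∀ t, w t ≠ 0) :
    Continuous (fun t => Projectivization.mk ℝ (w t) (h t)) :=
  continuous_pq.comp (hw.subtype_mk h)

lemma mk_congr {v w : Fin d → ℝ} (hv : v ≠ 0) (h : v = w) :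
    Projectivization.mk ℝ v hv = Projectivization.mk ℝ w (h ▸ hv) := by subst h; rfl

lemma mk_smul_eq {v : Fin d → ℝ} (hv : v ≠ 0) {c : ℝ} (hc : c ≠ 0) :
    Projectivization.mk ℝ (c • v) (by simp [smul_ne_zero hc hv]) = Projectivization.mk ℝ v hv := by
  rw [Projectivization.mk_eq_mk_iff]
  exact ⟨Units.mk0 c hc, rfl⟩

section chart
variable (f₀ : (Fin d → ℝ) →ₗ[ℝ] ℝ)

lemma chart_f0 {z : PSp d} (hz : f₀ z.rep ≠ 0) : f₀ (chartMap f₀ z) = 1 := by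
  simp [chartMap, _root_.map_smul, inv_mul_cancel₀ hz]

lemma chart_ne {z : PSp d} (hz : f₀ z.rep ≠ 0) : chartMap f₀ z ≠ 0 := by
  intro h
  have := chart_f0 f₀ hz
  rw [h] at this; simp at this

lemma rep_eq_smul_chart {z : PSp d} (hz : f₀ z.rep ≠ 0) :
    z.rep = (f₀ z.rep) • chartMap f₀ z := by
  simp [chartMap, smul_smul, mul_inv_cancel₀ hz]

lemma mk_chart {z : PSp d} (hz : f₀ z.rep ≠ 0) :
    Projectivization.mk ℝ (chartMap f₀ z) (chart_ne f₀ hz) = z := by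
  conv_rhs => rw [← Projectivization.mk_rep z]
  rw [Projectivization.mk_eq_mk_iff]
  exact ⟨Units.mk0 (f₀ z.rep)⁻¹ (inv_ne_zero hz), rfl⟩

lemma f_rep_eq (f : (Fin d → ℝ) →ₗ[ℝ] ℝ) {z : PSp d} (hz : f₀ z.rep ≠ 0) :
    f z.rep = (f₀ z.rep) * f (chartMap f₀ z) := by
  conv_lhs => rw [rep_eq_smul_chart f₀ hz]
  simp [_root_.map_smul]

lemma chart_mk {v : Fin d → ℝ} (hv : v ≠ 0) (hf : f₀ v ≠ 0) :
    chartMap f₀ (Projectivization.mk ℝ v hv) = (f₀ v)⁻¹ • v := by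
  obtain ⟨c, hc, hrep⟩ := exists_rep_smul v hv
  rw [chartMap, hrep]
  rw [_root_.map_smul, smul_smul]
  congr 1
  simp only [smul_eq_mul, _root_.mul_inv_rev]
  field_simp

lemma isClosed_normset (R : ℝ) : IsClosed {z : PSp d | ‖z.rep‖ ≤ R * |f₀ z.rep|} := by
  rw [← pq_isQuotientMap.isClosed_preimage]
  have : pq d ⁻¹' {z : PSp d | ‖z.rep‖ ≤ R * |f₀ z.rep|}
      = Subtype.val ⁻¹' {v : Fin d → ℝ | ‖v‖ ≤ R * |f₀ v|} := by
    ext ⟨v, hv⟩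
    obtain ⟨c, hc, hrep⟩ := exists_rep_smul v hv
    simp only [Set.mem_preimage, Set.mem_setOf_eq, pq, hrep, norm_smul, _root_.map_smul,
      smul_eq_mul, abs_mul]
    rw [Real.norm_eq_abs, mul_comm R (|c| * |f₀ v|), mul_assoc, mul_comm (|f₀ v|) R]
    exact mul_le_mul_iff_right₀ (abs_pos.mpr hc)
  rw [this]
  exact IsClosed.preimage continuous_subtype_val
    (isClosed_le continuous_norm (continuous_const.mul
      ((LinearMap.continuous_of_finiteDimensional f₀).abs)))

lemma mk_mem_closure_of_mem_closure {Ω : Set (PSp d)} {C : Set (Fin d → ℝ)}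
    (hC : ∀ w (hw : w ≠ 0), w ∈ C → Projectivization.mk ℝ w hw ∈ closure Ω)
    (hCne : ∀ w ∈ C, w ≠ (0 : Fin d → ℝ))
    {w : Fin d → ℝ} (hw : w ≠ 0) (hwc : w ∈ closure C) :
    Projectivization.mk ℝ w hw ∈ closure Ω := by
  obtain ⟨V, hVcl, hVpre⟩ := isClosed_induced_iff.1
    ((isClosed_closure (s := Ω)).preimage (continuous_pq (d := d)))
  have hCV : C ⊆ V := by
    intro u hu
    have : (⟨u, hCne u hu⟩ : {v : Fin d → ℝ // v ≠ 0}) ∈ Subtype.val ⁻¹' V := by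
      rw [hVpre]
      exact hC u (hCne u hu) hu
    exact this
  have hwV : w ∈ V := hVcl.closure_subset_iff.2 hCV hwc
  have : (⟨w, hw⟩ : {v : Fin d → ℝ // v ≠ 0}) ∈ Subtype.val ⁻¹' V := hwV
  rw [hVpre] at this
  exact this

lemma continuousAt_chartMap {z : PSp d} (hz : f₀ z.rep ≠ 0) :
    ContinuousAt (chartMap f₀) z := by
  rw [ContinuousAt, tendsto_nhds]
  intro s hs hzs
  have hopen : IsOpen {y : PSp d | f₀ y.rep ≠ 0 ∧ chartMap f₀ y ∈ s} := by
    rw [← pq_isQuotientMap.isOpen_preimage]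
    have heq : pq d ⁻¹' {y : PSp d | f₀ y.rep ≠ 0 ∧ chartMap f₀ y ∈ s}
        = Subtype.val ⁻¹' ({v : Fin d → ℝ | f₀ v ≠ 0} ∩ (fun v => (f₀ v)⁻¹ • v) ⁻¹' s) := by
      ext ⟨v, hv⟩
      obtain ⟨c, hc, hrep⟩ := exists_rep_smul v hv
      simp only [Set.mem_preimage, Set.mem_setOf_eq, pq, Set.mem_inter_iff]
      constructor
      · rintro ⟨h1, h2⟩
        have hfv : f₀ v ≠ 0 := by
          intro h0
          rw [hrep, _root_.map_smul, smul_eq_mul, h0, mul_zero] at h1; simp at h1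
        refine ⟨hfv, ?_⟩
        rwa [chart_mk f₀ hv hfv] at h2
      · rintro ⟨h1, h2⟩
        have hr : f₀ (Projectivization.mk ℝ v hv).rep ≠ 0 := by
          rw [hrep, _root_.map_smul, smul_eq_mul]
          exact mul_ne_zero hc h1
        refine ⟨hr, ?_⟩
        rwa [chart_mk f₀ hv h1]
    rw [heq]
    refine (IsOpen.preimage continuous_subtype_val ?_)
    refine ContinuousOn.isOpen_inter_preimage ?_ ?_ hs
    · exact ContinuousOn.smul
        (((LinearMap.continuous_of_finiteDimensional f₀).continuousOn).inv₀ (fun x hx => hx))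
        continuousOn_id
    · exact isOpen_ne_fun (LinearMap.continuous_of_finiteDimensional f₀) continuous_const
  exact Filter.mem_of_superset (hopen.mem_nhds ⟨hz, hzs⟩) (fun y hy => hy.2)

end chart

lemma core_aff {A B t₁ t₂ : ℝ} (h1 : 0 < t₁) (h12 : t₁ ≤ t₂) (h2 : t₂ < 1)
    (hne : ∀ t ∈ Set.Ioo (0:ℝ) 1, (1 - t) * A + t * B ≠ 0) :
    0 < ((1 - t₁) * A + t₁ * B) / ((1 - t₂) * A + t₂ * B) ∧
    ((1 - t₁) * A + t₁ * B) / ((1 - t₂) * A + t₂ * B) ≤ (1 - t₁) / (1 - t₂) := by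
  have ht₁ : t₁ ∈ Set.Ioo (0:ℝ) 1 := ⟨h1, lt_of_le_of_lt h12 h2⟩
  have ht₂ : t₂ ∈ Set.Ioo (0:ℝ) 1 := ⟨lt_of_lt_of_le h1 h12, h2⟩
  have main : ∀ A B : ℝ, (∀ t ∈ Set.Ioo (0:ℝ) 1, (1 - t) * A + t * B ≠ 0) →
      0 < (1 - t₁) * A + t₁ * B →
      0 < ((1 - t₁) * A + t₁ * B) / ((1 - t₂) * A + t₂ * B) ∧
      ((1 - t₁) * A + t₁ * B) / ((1 - t₂) * A + t₂ * B) ≤ (1 - t₁) / (1 - t₂) := by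
    intro A B hne hpos
    set h : ℝ → ℝ := fun t => (1 - t) * A + t * B with hh
    have hcont : Continuous h := by fun_prop
    have h2pos : 0 < h t₂ := by
      rcases lt_trichotomy (h t₂) 0 with hlt | heq | hgt
      · exfalso
        have : (0:ℝ) ∈ Set.Icc (h t₂) (h t₁) := ⟨le_of_lt hlt, le_of_lt hpos⟩
        obtain ⟨t, htmem, ht0⟩ := intermediate_value_Icc' h12 hcont.continuousOn this
        exact hne t ⟨lt_of_lt_of_le ht₁.1 htmem.1, lt_of_le_of_lt htmem.2 ht₂.2⟩ ht0
      · exact absurd heq (hne t₂ ht₂)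
      · exact hgt
    have hA : 0 ≤ A := by
      by_contra hA
      push_neg at hA
      have h0 : h 0 = A := by simp [hh]
      have : (0:ℝ) ∈ Set.Icc (h 0) (h t₁) := ⟨by rw [h0]; exact le_of_lt hA, le_of_lt hpos⟩
      obtain ⟨t, htmem, ht0⟩ := intermediate_value_Icc (le_of_lt h1) hcont.continuousOn this
      have htne : t ≠ 0 := by rintro rfl; rw [h0] at ht0; exact absurd ht0 (ne_of_lt hA)
      exact hne t ⟨lt_of_le_of_ne htmem.1 (Ne.symm htne), lt_of_le_of_lt htmem.2 ht₁.2⟩ ht0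
    have hB : 0 ≤ B := by
      by_contra hB
      push_neg at hB
      have h1e : h 1 = B := by simp [hh]
      have : (0:ℝ) ∈ Set.Icc (h 1) (h t₂) := ⟨by rw [h1e]; exact le_of_lt hB, le_of_lt h2pos⟩
      obtain ⟨t, htmem, ht0⟩ := intermediate_value_Icc' (le_of_lt h2) hcont.continuousOn this
      have htne : t ≠ 1 := by rintro rfl; rw [h1e] at ht0; exact absurd ht0 (ne_of_lt hB)
      exact hne t ⟨lt_of_lt_of_le ht₂.1 htmem.1, lt_of_le_of_ne htmem.2 htne⟩ ht0
    have h2pos' : 0 < (1 - t₂) * A + t₂ * B := h2pos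
    constructor
    · exact div_pos hpos h2pos'
    · rw [div_le_div_iff₀ h2pos' (by linarith : (0:ℝ) < 1 - t₂)]
      nlinarith [mul_nonneg (sub_nonneg.2 h12) hB]
  rcases lt_trichotomy ((1 - t₁) * A + t₁ * B) 0 with hlt | heq | hgt
  · have hne' : ∀ t ∈ Set.Ioo (0:ℝ) 1, (1 - t) * (-A) + t * (-B) ≠ 0 := by
      intro t ht
      have := hne t ht
      intro hc; apply this; linarith
    have := main (-A) (-B) hne' (by linarith)
    have e1 : (1 - t₁) * (-A) + t₁ * (-B) = -((1 - t₁) * A + t₁ * B) := by ring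
    have e2 : (1 - t₂) * (-A) + t₂ * (-B) = -((1 - t₂) * A + t₂ * B) := by ring
    rw [e1, e2, neg_div_neg_eq] at this
    exact this
  · exact absurd heq (hne t₁ ht₁)
  · exact main A B hne hgt

lemma ratio_bound (u v : Fin d → ℝ) (f g : (Fin d → ℝ) →ₗ[ℝ] ℝ) {t₁ t₂ : ℝ}
    (h1 : 0 < t₁) (h12 : t₁ ≤ t₂) (h2 : t₂ < 1)
    (hf : ∀ t ∈ Set.Ioo (0:ℝ) 1, f ((1-t) • u + t • v) ≠ 0)
    (hg : ∀ t ∈ Set.Ioo (0:ℝ) 1, g ((1-t) • u + t • v) ≠ 0) :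
    (f ((1-t₁) • u + t₁ • v) * g ((1-t₂) • u + t₂ • v)) /
      (f ((1-t₂) • u + t₂ • v) * g ((1-t₁) • u + t₁ • v))
      ≤ ((1-t₁) * t₂) / ((1-t₂) * t₁) := by
  have hfe : ∀ t : ℝ, f ((1-t) • u + t • v) = (1-t) * f u + t * f v := by
    intro t; simp [map_add, _root_.map_smul]
  have hge : ∀ t : ℝ, g ((1-t) • u + t • v) = (1-t) * g u + t * g v := by
    intro t; simp [map_add, _root_.map_smul]
  have hfc : ∀ t ∈ Set.Ioo (0:ℝ) 1, (1-t) * f u + t * f v ≠ 0 := by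
    intro t ht; rw [← hfe]; exact hf t ht
  have Cf := core_aff h1 h12 h2 hfc
  have hgc : ∀ s ∈ Set.Ioo (0:ℝ) 1, (1-s) * g v + s * g u ≠ 0 := by
    intro s hs
    have : (1-s) * g v + s * g u = (1-(1-s)) * g u + (1-s) * g v := by ring
    rw [this, ← hge]
    exact hg (1-s) ⟨by linarith [hs.2], by linarith [hs.1]⟩
  have Cg := core_aff (t₁ := 1 - t₂) (t₂ := 1 - t₁) (by linarith) (by linarith) (by linarith) hgc
  have eg1 : (1 - (1-t₂)) * g v + (1-t₂) * g u = (1-t₂) * g u + t₂ * g v := by ring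
  have eg2 : (1 - (1-t₁)) * g v + (1-t₁) * g u = (1-t₁) * g u + t₁ * g v := by ring
  rw [eg1, eg2] at Cg
  have key : ((1-t₁) * f u + t₁ * f v) * ((1-t₂) * g u + t₂ * g v) /
      (((1-t₂) * f u + t₂ * f v) * ((1-t₁) * g u + t₁ * g v))
      ≤ ((1-t₁) * t₂) / ((1-t₂) * t₁) := by
    rw [← div_mul_div_comm]
    calc ((1-t₁) * f u + t₁ * f v) / ((1-t₂) * f u + t₂ * f v) *
          (((1-t₂) * g u + t₂ * g v) / ((1-t₁) * g u + t₁ * g v))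
        ≤ ((1-t₁)/(1-t₂)) * (t₂ / t₁) := by
          apply mul_le_mul Cf.2 ?_ (le_of_lt Cg.1) ?_
          · calc ((1-t₂) * g u + t₂ * g v) / ((1-t₁) * g u + t₁ * g v)
                ≤ (1 - (1-t₂)) / (1 - (1-t₁)) := Cg.2
              _ = t₂ / t₁ := by norm_num
          · exact div_nonneg (by linarith) (by linarith)
      _ = ((1-t₁) * t₂) / ((1-t₂) * t₁) := div_mul_div_comm _ _ _ _
  rw [hfe, hfe, hge, hge]
  exact key

lemma ratio_mk (f g : (Fin d → ℝ) →ₗ[ℝ] ℝ) {v w : Fin d → ℝ} (hv : v ≠ 0) (hw : w ≠ 0) :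
    f (Projectivization.mk ℝ v hv).rep * g (Projectivization.mk ℝ w hw).rep /
      (f (Projectivization.mk ℝ w hw).rep * g (Projectivization.mk ℝ v hv).rep)
      = f v * g w / (f w * g v) := by
  obtain ⟨c, hc, hcv⟩ := exists_rep_smul v hv
  obtain ⟨e, he, hev⟩ := exists_rep_smul w hw
  rw [hcv, hev]
  simp only [_root_.map_smul, smul_eq_mul]
  rw [show c * f v * (e * g w) = (c * e) * (f v * g w) by ring,
      show e * f w * (c * g v) = (c * e) * (f w * g v) by ring,
      mul_div_mul_left _ _ (mul_ne_zero hc he)]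

lemma openSegV_subset_closure {Ω : Set (PSp d)} {C : Set (Fin d → ℝ)} (hC : Convex ℝ C)
    (hmk : ∀ w (hw : w ≠ (0 : Fin d → ℝ)), w ∈ C → Projectivization.mk ℝ w hw ∈ closure Ω)
    {u v : Fin d → ℝ} (hu : u ∈ C) (hv : v ∈ C) : openSegV u v ⊆ closure Ω := by
  rintro z ⟨a, b, ha, hb, hne, rfl⟩
  have hab : (0:ℝ) < a + b := by linarith
  have hvec : a • u + b • v = (a+b) • ((a/(a+b)) • u + (b/(a+b)) • v) := by
    rw [smul_add, smul_smul, smul_smul]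
    rw [mul_div_cancel₀ _ (ne_of_gt hab), mul_div_cancel₀ _ (ne_of_gt hab)]
  have hwC : (a/(a+b)) • u + (b/(a+b)) • v ∈ C :=
    hC hu hv (by positivity) (by positivity) (by field_simp)
  have hwne : (a/(a+b)) • u + (b/(a+b)) • v ≠ 0 := by
    intro h0; apply hne; rw [hvec, h0, smul_zero]
  rw [mk_congr hne hvec, mk_smul_eq hwne (ne_of_gt hab)]
  exact hmk _ hwne hwC

lemma one_mem_crossSet {C : Set (PSp d)} (f₀ : (Fin d → ℝ) →ₗ[ℝ] ℝ)
    (h : ∀ z ∈ C, f₀ z.rep ≠ 0) {x' y' : PSp d}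
    (hx' : f₀ x'.rep ≠ 0) (hy' : f₀ y'.rep ≠ 0) : (1:ℝ) ∈ crossSet C x' y' := by
  refine ⟨f₀, f₀, h, h, ?_⟩
  rw [mul_comm (f₀ y'.rep)]
  exact (div_self (mul_ne_zero hx' hy')).symm


lemma crossSet_le_of_seg {C : Set (PSp d)} (u v : Fin d → ℝ)
    (hwne : ∀ t : ℝ, (1-t) • u + t • v ≠ 0) {x' y' : PSp d} {t₁ t₂ : ℝ}
    (h1 : 0 < t₁) (h12 : t₁ ≤ t₂) (h2 : t₂ < 1)
    (hx' : x' = Projectivization.mk ℝ ((1-t₁) • u + t₁ • v) (hwne t₁))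
    (hy' : y' = Projectivization.mk ℝ ((1-t₂) • u + t₂ • v) (hwne t₂))
    (hseg : ∀ t ∈ Set.Ioo (0:ℝ) 1, Projectivization.mk ℝ ((1-t) • u + t • v) (hwne t) ∈ C) :
    ∀ r ∈ crossSet C x' y', r ≤ ((1-t₁) * t₂) / ((1-t₂) * t₁) := by
  rintro r ⟨f, g, hf, hg, rfl⟩
  rw [hx', hy', ratio_mk]
  have hval : ∀ (f : (Fin d → ℝ) →ₗ[ℝ] ℝ), (∀ z ∈ C, f z.rep ≠ 0) →
      ∀ t ∈ Set.Ioo (0:ℝ) 1, f ((1-t) • u + t • v) ≠ 0 := by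
    intro f hf t ht
    have hne := hf _ (hseg t ht)
    obtain ⟨c, hc, hrep⟩ := exists_rep_smul _ (hwne t)
    rw [hrep, _root_.map_smul, smul_eq_mul] at hne
    exact fun h0 => hne (by rw [h0, mul_zero])
  exact ratio_bound u v f g h1 h12 h2 (hval f hf) (hval g hg)

lemma crossSet_bddAbove {Ω : Set (PSp d)} {f₀ : (Fin d → ℝ) →ₗ[ℝ] ℝ}
    (hop : IsOpen Ω) (hf₀ : ∀ z ∈ Ω, f₀ z.rep ≠ 0)
    (hconv : Convex ℝ (chartMap f₀ '' Ω)) {x' y' : PSp d} (hx' : x' ∈ Ω) (hy' : y' ∈ Ω) :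
    BddAbove (crossSet Ω x' y') := by
  classical
  set p := chartMap f₀ x' with hp
  set q := chartMap f₀ y' with hq
  have hpC : p ∈ chartMap f₀ '' Ω := Set.mem_image_of_mem _ hx'
  have hqC : q ∈ chartMap f₀ '' Ω := Set.mem_image_of_mem _ hy'
  have hC0f : ∀ w ∈ chartMap f₀ '' Ω, f₀ w = 1 := by
    rintro w ⟨z, hz, rfl⟩; exact chart_f0 f₀ (hf₀ z hz)
  have hC0mk : ∀ w (hw : w ≠ 0), w ∈ chartMap f₀ '' Ω → Projectivization.mk ℝ w hw ∈ Ω := by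
    rintro w hw ⟨z, hz, rfl⟩
    have heq : Projectivization.mk ℝ (chartMap f₀ z) hw = z := mk_chart f₀ (hf₀ z hz)
    rw [heq]; exact hz
  set W : ℝ → (Fin d → ℝ) := fun t => (1-t) • p + t • q with hW
  have hWf : ∀ t, f₀ (W t) = 1 := by
    intro t
    simp only [hW, map_add, _root_.map_smul, smul_eq_mul, hC0f p hpC, hC0f q hqC]
    ring
  have hWne : ∀ t, W t ≠ 0 := by
    intro t h0
    have := hWf t; rw [h0, map_zero] at this; norm_num at this
  have hWcont : Continuous W := by fun_prop
  have hS : IsOpen {t : ℝ | Projectivization.mk ℝ (W t) (hWne t) ∈ Ω} :=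
    hop.preimage (continuous_mk_comp W hWcont hWne)
  have hW0 : W 0 = p := by simp [hW]
  have hW1 : W 1 = q := by simp [hW]
  have h0S : (0:ℝ) ∈ {t : ℝ | Projectivization.mk ℝ (W t) (hWne t) ∈ Ω} := by
    show Projectivization.mk ℝ (W 0) (hWne 0) ∈ Ω
    rw [mk_congr (hWne 0) hW0]
    exact hC0mk p _ hpC
  have h1S : (1:ℝ) ∈ {t : ℝ | Projectivization.mk ℝ (W t) (hWne t) ∈ Ω} := by
    show Projectivization.mk ℝ (W 1) (hWne 1) ∈ Ω
    rw [mk_congr (hWne 1) hW1]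
    exact hC0mk q _ hqC
  obtain ⟨ε, hε, hball⟩ := Metric.isOpen_iff.1 hS 0 h0S
  obtain ⟨ε', hε', hball'⟩ := Metric.isOpen_iff.1 hS 1 h1S
  have hmem1 : Projectivization.mk ℝ (W (-(ε/2))) (hWne _) ∈ Ω := by
    apply hball
    rw [Metric.mem_ball, Real.dist_eq, sub_zero, abs_neg, abs_of_pos (by linarith)]
    linarith
  have hmem2 : Projectivization.mk ℝ (W (1+ε'/2)) (hWne _) ∈ Ω := by
    apply hball'
    rw [Metric.mem_ball, Real.dist_eq]
    rw [show (1:ℝ)+ε'/2-1 = ε'/2 by ring, abs_of_pos (by linarith)]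
    linarith
  set u := W (-(ε/2)) with hu
  set v := W (1+ε'/2) with hv
  have hfu : f₀ u = 1 := hWf _
  have hfv : f₀ v = 1 := hWf _
  have huC : u ∈ chartMap f₀ '' Ω := by
    refine ⟨Projectivization.mk ℝ u (hWne _), hmem1, ?_⟩
    rw [chart_mk f₀ (hWne _) (by rw [hfu]; norm_num), hfu]
    norm_num
    rfl
  have hvC : v ∈ chartMap f₀ '' Ω := by
    refine ⟨Projectivization.mk ℝ v (hWne _), hmem2, ?_⟩
    rw [chart_mk f₀ (hWne _) (by rw [hfv]; norm_num), hfv]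
    norm_num
    rfl
  have hW2f : ∀ t : ℝ, f₀ ((1-t) • u + t • v) = 1 := by
    intro t
    simp only [map_add, _root_.map_smul, smul_eq_mul, hfu, hfv]
    ring
  have hW2ne : ∀ t : ℝ, (1-t) • u + t • v ≠ 0 := by
    intro t h0
    have := hW2f t; rw [h0, map_zero] at this; norm_num at this
  set D : ℝ := 1 + ε/2 + ε'/2 with hD
  have hDpos : 0 < D := by rw [hD]; linarith
  have hDne : D ≠ 0 := ne_of_gt hDpos
  set τ₁ : ℝ := (ε/2)/D with hτ₁
  set τ₂ : ℝ := (1+ε/2)/D with hτ₂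
  have hτ1pos : 0 < τ₁ := by rw [hτ₁]; positivity
  have hτ12 : τ₁ ≤ τ₂ := by
    rw [hτ₁, hτ₂]
    gcongr
    linarith
  have hτ2lt : τ₂ < 1 := by
    rw [hτ₂, div_lt_one hDpos, hD]; linarith
  have hid1 : (1-τ₁) • u + τ₁ • v = p := by
    rw [hu, hv]
    simp only [hW, hτ₁, hτ₂]
    match_scalars <;> (field_simp; ring)
  have hid2 : (1-τ₂) • u + τ₂ • v = q := by
    rw [hu, hv]
    simp only [hW, hτ₁, hτ₂]
    match_scalars <;> (field_simp; ring)
  have hx'eq : x' = Projectivization.mk ℝ ((1-τ₁) • u + τ₁ • v) (hW2ne τ₁) := by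
    rw [mk_congr (hW2ne τ₁) hid1]
    exact (mk_chart f₀ (hf₀ x' hx')).symm
  have hy'eq : y' = Projectivization.mk ℝ ((1-τ₂) • u + τ₂ • v) (hW2ne τ₂) := by
    rw [mk_congr (hW2ne τ₂) hid2]
    exact (mk_chart f₀ (hf₀ y' hy')).symm
  have hseg : ∀ t ∈ Set.Ioo (0:ℝ) 1,
      Projectivization.mk ℝ ((1-t) • u + t • v) (hW2ne t) ∈ Ω := by
    intro t ht
    apply hC0mk _ (hW2ne t)
    exact hconv huC hvC (by linarith [ht.2]) (le_of_lt ht.1) (by ring)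
  exact ⟨((1-τ₁) * τ₂) / ((1-τ₂) * τ₁),
    fun r hr => crossSet_le_of_seg u v hW2ne hτ1pos hτ12 hτ2lt hx'eq hy'eq hseg r hr⟩

set_option maxHeartbeats 1000000 in
/-- **Proposition 5.2**: if `x_n → x` and `y_n → y` in `cl(Ω)` with
`liminf H_Ω(x_n, y_n) < ∞`, then `y ∈ F_Ω(x)` and
`H_{F_Ω(x)}(x,y) ≤ liminf H_Ω(x_n,y_n)`. -/
theorem dist_est_and_faces {d : ℕ} (Ω : Set (PSp d)) (hΩ : IsProperlyConvexDomain Ω)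
    (xs ys : ℕ → PSp d) (x y : PSp d)
    (hxs : ∀ n, xs n ∈ Ω) (hys : ∀ n, ys n ∈ Ω)
    (hx : Filter.Tendsto xs Filter.atTop (nhds x)) (hxcl : x ∈ closure Ω)
    (hy : Filter.Tendsto ys Filter.atTop (nhds y)) (hycl : y ∈ closure Ω)
    (hfin : Filter.liminf (fun n => (hilbertDist Ω (xs n) (ys n) : EReal)) Filter.atTop < ⊤) :
    y ∈ face Ω x ∧
    (hilbertDist (face Ω x) x y : EReal) ≤
      Filter.liminf (fun n => (hilbertDist Ω (xs n) (ys n) : EReal)) Filter.atTop := by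
  classical
  obtain ⟨hop, hnem, f₀, hf₀, hconv, hbdd⟩ := hΩ
  set C₀ := chartMap f₀ '' Ω with hC₀def
  have hC0f : ∀ w ∈ C₀, f₀ w = 1 := by
    rintro w ⟨z, hz, rfl⟩; exact chart_f0 f₀ (hf₀ z hz)
  have hC0ne : ∀ w ∈ C₀, w ≠ (0 : Fin d → ℝ) := by
    intro w hw h0
    have := hC0f w hw; rw [h0, map_zero] at this; norm_num at this
  have hclf : ∀ w ∈ closure C₀, f₀ w = 1 := by
    have hsub : closure C₀ ⊆ {w | f₀ w = 1} := closure_minimal (fun w hw => hC0f w hw)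
      (isClosed_eq (LinearMap.continuous_of_finiteDimensional f₀) continuous_const)
    exact fun w hw => hsub hw
  have hclconv : Convex ℝ (closure C₀) := hconv.closure
  have hC0mkΩ : ∀ w (hw : w ≠ 0), w ∈ C₀ → Projectivization.mk ℝ w hw ∈ Ω := by
    rintro w hw ⟨z, hz, rfl⟩
    have heq : Projectivization.mk ℝ (chartMap f₀ z) hw = z := mk_chart f₀ (hf₀ z hz)
    rw [heq]; exact hz
  have hclmk : ∀ w (hw : w ≠ 0), w ∈ closure C₀ → Projectivization.mk ℝ w hw ∈ closure Ω :=
    fun w hw hwc => mk_mem_closure_of_mem_closure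
      (fun w' hw' hw'C => subset_closure (hC0mkΩ w' hw' hw'C)) hC0ne hw hwc
  obtain ⟨R, hR⟩ := isBounded_iff_forall_norm_le.1 hbdd
  have hcl0 : ∀ z ∈ closure Ω, f₀ z.rep ≠ 0 := by
    have hsub : Ω ⊆ {z : PSp d | ‖z.rep‖ ≤ R * |f₀ z.rep|} := by
      intro z hz
      show ‖z.rep‖ ≤ R * |f₀ z.rep|
      conv_lhs => rw [rep_eq_smul_chart f₀ (hf₀ z hz)]
      rw [norm_smul, Real.norm_eq_abs]
      calc |f₀ z.rep| * ‖chartMap f₀ z‖ ≤ |f₀ z.rep| * R := by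
            exact mul_le_mul_of_nonneg_left (hR _ (Set.mem_image_of_mem _ hz)) (abs_nonneg _)
        _ = R * |f₀ z.rep| := mul_comm _ _
    intro z hz
    have hmem := (isClosed_normset f₀ R).closure_subset_iff.2 hsub hz
    intro h0
    have hle : ‖z.rep‖ ≤ 0 := by
      have h' := hmem
      simp only [Set.mem_setOf_eq, h0, abs_zero, mul_zero] at h'
      exact h'
    exact (Projectivization.rep_nonzero z) (norm_le_zero_iff.1 hle)
  have hclchart : ∀ z ∈ closure Ω, chartMap f₀ z ∈ closure C₀ := by
    intro z hz
    exact ((continuousAt_chartMap f₀ (hcl0 z hz)).continuousWithinAt).mem_closure_image hz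
  have hfacesub : face Ω x ⊆ closure Ω := by
    intro z hz
    rcases hz with rfl | hz
    · exact hxcl
    · exact hz.1
  have hface0 : ∀ z ∈ face Ω x, f₀ z.rep ≠ 0 := fun z hz => hcl0 z (hfacesub hz)
  have hbdd_n : ∀ n, BddAbove (crossSet Ω (xs n) (ys n)) :=
    fun n => crossSet_bddAbove hop hf₀ hconv (hxs n) (hys n)
  have hone_n : ∀ n, (1:ℝ) ∈ crossSet Ω (xs n) (ys n) :=
    fun n => one_mem_crossSet f₀ hf₀ (hf₀ _ (hxs n)) (hf₀ _ (hys n))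
  have hsup1 : ∀ n, 1 ≤ sSup (crossSet Ω (xs n) (ys n)) :=
    fun n => le_csSup (hbdd_n n) (hone_n n)
  have hd0 : ∀ n, 0 ≤ hilbertDist Ω (xs n) (ys n) := by
    intro n
    have hlog := Real.log_nonneg (hsup1 n)
    show 0 ≤ (1/2 : ℝ) * Real.log (sSup (crossSet Ω (xs n) (ys n)))
    positivity
  set L := Filter.liminf (fun n => ((hilbertDist Ω (xs n) (ys n) : ℝ) : EReal)) Filter.atTop
    with hLdef
  have hL0 : (0 : EReal) ≤ L := by
    refine Filter.le_liminf_of_le (by isBoundedDefault) ?_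
    exact Filter.Eventually.of_forall (fun n => by exact_mod_cast hd0 n)
  have key : ∀ M : ℝ, L < (M : EReal) → y ∈ face Ω x ∧ hilbertDist (face Ω x) x y ≤ M := by
    intro M hM
    have hMpos : (0:ℝ) < M := by exact_mod_cast lt_of_le_of_lt hL0 hM
    by_cases hxy : x = y
    · subst hxy
      refine ⟨Set.mem_insert _ _, ?_⟩
      have hfx : f₀ x.rep ≠ 0 := hcl0 x hxcl
      have hset : crossSet (face Ω x) x x = {1} := by
        apply Set.eq_singleton_iff_unique_mem.2
        constructor
        · exact one_mem_crossSet f₀ hface0 hfx hfx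
        · rintro r ⟨f, g, hf, hg, rfl⟩
          exact div_self (mul_ne_zero (hf x (Set.mem_insert _ _)) (hg x (Set.mem_insert _ _)))
      show (1/2 : ℝ) * Real.log (sSup (crossSet (face Ω x) x x)) ≤ M
      rw [hset, csSup_singleton, Real.log_one, mul_zero]
      linarith
    · set p := chartMap f₀ x with hpdef
      set q := chartMap f₀ y with hqdef
      have hpcl : p ∈ closure C₀ := hclchart x hxcl
      have hqcl : q ∈ closure C₀ := hclchart y hycl
      have hfp : f₀ p = 1 := hclf p hpcl
      have hfq : f₀ q = 1 := hclf q hqcl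
      have hpq : p ≠ q := by
        intro h
        apply hxy
        rw [← mk_chart f₀ (hcl0 x hxcl), ← mk_chart f₀ (hcl0 y hycl)]
        exact mk_congr _ h
      have hpn : Filter.Tendsto (fun n => chartMap f₀ (xs n)) Filter.atTop (nhds p) :=
        ((continuousAt_chartMap f₀ (hcl0 x hxcl)).tendsto).comp hx
      have hqn : Filter.Tendsto (fun n => chartMap f₀ (ys n)) Filter.atTop (nhds q) :=
        ((continuousAt_chartMap f₀ (hcl0 y hycl)).tendsto).comp hy
      set K := Real.exp (2*M) with hKdef
      have hK1 : 1 < K := by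
        rw [hKdef, show (1:ℝ) = Real.exp 0 by simp]
        exact Real.exp_lt_exp.2 (by linarith)
      have hKpos : (0:ℝ) < K := by linarith
      have hlogK : Real.log K = 2*M := by rw [hKdef]; exact Real.log_exp _
      clear_value K
      have hfreq : ∃ᶠ n in Filter.atTop, hilbertDist Ω (xs n) (ys n) < M := by
        have hfr := Filter.frequently_lt_of_liminf_lt (by isBoundedDefault) hM
        refine hfr.mono ?_
        intro n hn
        exact_mod_cast hn
      have hsupK : ∀ n, hilbertDist Ω (xs n) (ys n) < M →
          sSup (crossSet Ω (xs n) (ys n)) < K := by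
        intro n hn
        have hpos : (0:ℝ) < sSup (crossSet Ω (xs n) (ys n)) :=
          lt_of_lt_of_le one_pos (hsup1 n)
        have hn' : (1/2 : ℝ) * Real.log (sSup (crossSet Ω (xs n) (ys n))) < M := hn
        calc sSup (crossSet Ω (xs n) (ys n))
            = Real.exp (Real.log (sSup (crossSet Ω (xs n) (ys n)))) := (Real.exp_log hpos).symm
          _ < Real.exp (2*M) := Real.exp_lt_exp.2 (by linarith)
          _ = K := hKdef.symm
      have stepA : ∀ s t : ℝ, 0 < s → 0 < t →
          p + s • (p - q) ∉ closure C₀ → q + t • (q - p) ∉ closure C₀ →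
          ((1+s)/s) * ((1+t)/t) ≤ K := by
        intro s t hs ht has hbt
        by_contra hgt
        push_neg at hgt
        obtain ⟨φ, cφ, hφ1, hφ2⟩ :=
          geometric_hahn_banach_point_closed hclconv isClosed_closure hbt
        obtain ⟨ψ, cψ, hψ1, hψ2⟩ :=
          geometric_hahn_banach_point_closed hclconv isClosed_closure has
        set ℓ : (Fin d → ℝ) →ₗ[ℝ] ℝ := φ.toLinearMap - cφ • f₀ with hℓdef
        set m : (Fin d → ℝ) →ₗ[ℝ] ℝ := ψ.toLinearMap - cψ • f₀ with hmdef
        have hℓw : ∀ w, ℓ w = φ w - cφ * f₀ w := by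
          intro w; simp [hℓdef, LinearMap.sub_apply, LinearMap.smul_apply, smul_eq_mul]
        have hmw : ∀ w, m w = ψ w - cψ * f₀ w := by
          intro w; simp [hmdef, LinearMap.sub_apply, LinearMap.smul_apply, smul_eq_mul]
        have hℓpos : ∀ w ∈ closure C₀, 0 < ℓ w := by
          intro w hw
          rw [hℓw, hclf w hw]
          have := hφ2 w hw
          linarith
        have hmpos : ∀ w ∈ closure C₀, 0 < m w := by
          intro w hw
          rw [hmw, hclf w hw]
          have := hψ2 w hw
          linarith
        have hfb : f₀ (q + t • (q - p)) = 1 := by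
          rw [map_add, _root_.map_smul, map_sub, smul_eq_mul, hfp, hfq]
          ring
        have hfa : f₀ (p + s • (p - q)) = 1 := by
          rw [map_add, _root_.map_smul, map_sub, smul_eq_mul, hfp, hfq]
          ring
        have hℓb : ℓ (q + t • (q - p)) < 0 := by
          rw [hℓw, hfb]; linarith [hφ1]
        have hma : m (p + s • (p - q)) < 0 := by
          rw [hmw, hfa]; linarith [hψ1]
        have hℓcont : Continuous ℓ := LinearMap.continuous_of_finiteDimensional ℓ
        have hmcont : Continuous m := LinearMap.continuous_of_finiteDimensional m
        have hev1 : ∀ᶠ n in Filter.atTop,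
            ℓ (chartMap f₀ (ys n) + t • (chartMap f₀ (ys n) - chartMap f₀ (xs n))) < 0 := by
          have htend : Filter.Tendsto
              (fun n => ℓ (chartMap f₀ (ys n) + t • (chartMap f₀ (ys n) - chartMap f₀ (xs n))))
              Filter.atTop (nhds (ℓ (q + t • (q - p)))) :=
            (hℓcont.tendsto _).comp (hqn.add ((hqn.sub hpn).const_smul t))
          exact htend.eventually_lt_const hℓb
        have hev2 : ∀ᶠ n in Filter.atTop,
            m (chartMap f₀ (xs n) + s • (chartMap f₀ (xs n) - chartMap f₀ (ys n))) < 0 := by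
          have htend : Filter.Tendsto
              (fun n => m (chartMap f₀ (xs n) + s • (chartMap f₀ (xs n) - chartMap f₀ (ys n))))
              Filter.atTop (nhds (m (p + s • (p - q)))) :=
            (hmcont.tendsto _).comp (hpn.add ((hpn.sub hqn).const_smul s))
          exact htend.eventually_lt_const hma
        obtain ⟨n, hdn, h1n, h2n⟩ := (hfreq.and_eventually (hev1.and hev2)).exists
        have hpnC : chartMap f₀ (xs n) ∈ C₀ := Set.mem_image_of_mem _ (hxs n)
        have hqnC : chartMap f₀ (ys n) ∈ C₀ := Set.mem_image_of_mem _ (hys n)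
        have hℓpn : 0 < ℓ (chartMap f₀ (xs n)) := hℓpos _ (subset_closure hpnC)
        have hℓqn : 0 < ℓ (chartMap f₀ (ys n)) := hℓpos _ (subset_closure hqnC)
        have hmpn : 0 < m (chartMap f₀ (xs n)) := hmpos _ (subset_closure hpnC)
        have hmqn : 0 < m (chartMap f₀ (ys n)) := hmpos _ (subset_closure hqnC)
        have hnzℓ : ∀ z ∈ Ω, ℓ z.rep ≠ 0 := by
          intro z hz
          rw [f_rep_eq f₀ ℓ (hf₀ z hz)]
          exact mul_ne_zero (hf₀ z hz)
            (ne_of_gt (hℓpos _ (subset_closure (Set.mem_image_of_mem _ hz))))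
        have hnzm : ∀ z ∈ Ω, m z.rep ≠ 0 := by
          intro z hz
          rw [f_rep_eq f₀ m (hf₀ z hz)]
          exact mul_ne_zero (hf₀ z hz)
            (ne_of_gt (hmpos _ (subset_closure (Set.mem_image_of_mem _ hz))))
        have hmem : (ℓ (xs n).rep * m (ys n).rep) / (ℓ (ys n).rep * m (xs n).rep)
            ∈ crossSet Ω (xs n) (ys n) := ⟨ℓ, m, hnzℓ, hnzm, rfl⟩
        have hval : (ℓ (xs n).rep * m (ys n).rep) / (ℓ (ys n).rep * m (xs n).rep)
            = (ℓ (chartMap f₀ (xs n)) * m (chartMap f₀ (ys n))) /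
              (ℓ (chartMap f₀ (ys n)) * m (chartMap f₀ (xs n))) := by
          rw [f_rep_eq f₀ ℓ (hf₀ _ (hxs n)), f_rep_eq f₀ m (hf₀ _ (hys n)),
              f_rep_eq f₀ ℓ (hf₀ _ (hys n)), f_rep_eq f₀ m (hf₀ _ (hxs n))]
          rw [show f₀ (xs n).rep * ℓ (chartMap f₀ (xs n)) *
                (f₀ (ys n).rep * m (chartMap f₀ (ys n)))
              = (f₀ (xs n).rep * f₀ (ys n).rep) *
                (ℓ (chartMap f₀ (xs n)) * m (chartMap f₀ (ys n))) by ring,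
            show f₀ (ys n).rep * ℓ (chartMap f₀ (ys n)) *
                (f₀ (xs n).rep * m (chartMap f₀ (xs n)))
              = (f₀ (xs n).rep * f₀ (ys n).rep) *
                (ℓ (chartMap f₀ (ys n)) * m (chartMap f₀ (xs n))) by ring,
            mul_div_mul_left _ _ (mul_ne_zero (hf₀ _ (hxs n)) (hf₀ _ (hys n)))]
        have e1 : (1+t)/t < ℓ (chartMap f₀ (xs n)) / ℓ (chartMap f₀ (ys n)) := by
          rw [div_lt_div_iff₀ ht hℓqn]
          have hexp : ℓ (chartMap f₀ (ys n) + t • (chartMap f₀ (ys n) - chartMap f₀ (xs n)))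
              = (1+t) * ℓ (chartMap f₀ (ys n)) - t * ℓ (chartMap f₀ (xs n)) := by
            rw [map_add, _root_.map_smul, map_sub, smul_eq_mul]
            ring
          rw [hexp] at h1n
          linarith
        have e2 : (1+s)/s < m (chartMap f₀ (ys n)) / m (chartMap f₀ (xs n)) := by
          rw [div_lt_div_iff₀ hs hmpn]
          have hexp : m (chartMap f₀ (xs n) + s • (chartMap f₀ (xs n) - chartMap f₀ (ys n)))
              = (1+s) * m (chartMap f₀ (xs n)) - s * m (chartMap f₀ (ys n)) := by
            rw [map_add, _root_.map_smul, map_sub, smul_eq_mul]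
            ring
          rw [hexp] at h2n
          linarith
        have hgt2 : K < (ℓ (chartMap f₀ (xs n)) * m (chartMap f₀ (ys n))) /
            (ℓ (chartMap f₀ (ys n)) * m (chartMap f₀ (xs n))) := by
          rw [← div_mul_div_comm]
          calc K < ((1+s)/s) * ((1+t)/t) := hgt
            _ = ((1+t)/t) * ((1+s)/s) := mul_comm _ _
            _ < (ℓ (chartMap f₀ (xs n)) / ℓ (chartMap f₀ (ys n))) *
                (m (chartMap f₀ (ys n)) / m (chartMap f₀ (xs n))) := by
                apply mul_lt_mul'' e1 e2 (by positivity) (by positivity)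
        have hle : (ℓ (xs n).rep * m (ys n).rep) / (ℓ (ys n).rep * m (xs n).rep)
            ≤ sSup (crossSet Ω (xs n) (ys n)) := le_csSup (hbdd_n n) hmem
        rw [hval] at hle
        have hfin2 := hsupK n hdn
        linarith
      -- Step B
      have hclR : ∀ w ∈ closure C₀, ‖w‖ ≤ R :=
        fun w hw => closure_minimal hR (isClosed_le continuous_norm continuous_const) hw
      have hbddgen : ∀ z w : Fin d → ℝ, z ≠ w →
          BddAbove {s : ℝ | 0 ≤ s ∧ z + s • (z - w) ∈ closure C₀} := by
        intro z w hzw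
        have hnorm : (0:ℝ) < ‖z - w‖ := by rw [norm_pos_iff]; exact sub_ne_zero.2 hzw
        refine ⟨(R + ‖z‖)/‖z - w‖, ?_⟩
        rintro s ⟨hs0, hsmem⟩
        have hn1 : ‖z + s • (z - w)‖ ≤ R := hclR _ hsmem
        have htri : ‖s • (z - w)‖ ≤ ‖z + s • (z - w)‖ + ‖z‖ := by
          calc ‖s • (z - w)‖ = ‖(z + s • (z - w)) - z‖ := by congr 1; abel
            _ ≤ ‖z + s • (z - w)‖ + ‖z‖ := norm_sub_le _ _
        rw [norm_smul, Real.norm_eq_abs, abs_of_nonneg hs0] at htri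
        rw [le_div_iff₀ hnorm]
        nlinarith
      have hclosedgen : ∀ z w : Fin d → ℝ,
          IsClosed {s : ℝ | 0 ≤ s ∧ z + s • (z - w) ∈ closure C₀} := by
        intro z w
        have h1 : IsClosed ({s : ℝ | 0 ≤ s} ∩
            (fun s : ℝ => z + s • (z - w)) ⁻¹' closure C₀) :=
          (isClosed_le continuous_const continuous_id).inter
            (isClosed_closure.preimage (by fun_prop))
        exact h1
      set Sset := {s : ℝ | 0 ≤ s ∧ p + s • (p - q) ∈ closure C₀} with hSsetdef
      set Tset := {t : ℝ | 0 ≤ t ∧ q + t • (q - p) ∈ closure C₀} with hTsetdef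
      have hS0 : (0:ℝ) ∈ Sset := ⟨le_refl 0, by simp only [zero_smul, add_zero]; exact hpcl⟩
      have hT0 : (0:ℝ) ∈ Tset := ⟨le_refl 0, by simp only [zero_smul, add_zero]; exact hqcl⟩
      have hSbdd : BddAbove Sset := hbddgen p q hpq
      have hTbdd : BddAbove Tset := hbddgen q p (Ne.symm hpq)
      set sS := sSup Sset with hsSdef
      set tS := sSup Tset with htSdef
      have hsmem : sS ∈ Sset := IsClosed.csSup_mem (hclosedgen p q) ⟨0, hS0⟩ hSbdd
      have htmem : tS ∈ Tset := IsClosed.csSup_mem (hclosedgen q p) ⟨0, hT0⟩ hTbdd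
      have hs0 : 0 ≤ sS := hsmem.1
      have ht0 : 0 ≤ tS := htmem.1
      have houtS : ∀ s, sS < s → p + s • (p - q) ∉ closure C₀ := by
        intro s hlt hmemc
        exact absurd (le_csSup hSbdd ⟨le_trans hs0 (le_of_lt hlt), hmemc⟩) (not_le.2 hlt)
      have houtT : ∀ t, tS < t → q + t • (q - p) ∉ closure C₀ := by
        intro t hlt hmemc
        exact absurd (le_csSup hTbdd ⟨le_trans ht0 (le_of_lt hlt), hmemc⟩) (not_le.2 hlt)
      have hspos : 0 < sS := by
        by_contra hle
        push_neg at hle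
        have h1 := stepA (1/K) (tS+1) (by positivity) (by linarith)
          (houtS _ (lt_of_le_of_lt hle (by positivity))) (houtT _ (lt_add_one tS))
        have hfac : (1+1/K)/(1/K) = K + 1 := by field_simp
        have hsec : (1:ℝ) ≤ (1+(tS+1))/(tS+1) := by
          rw [le_div_iff₀ (by linarith)]; linarith
        rw [hfac] at h1
        have hmul := mul_le_mul_of_nonneg_left hsec (by linarith : (0:ℝ) ≤ K+1)
        rw [mul_one] at hmul
        linarith
      have htpos : 0 < tS := by
        by_contra hle
        push_neg at hle
        have h1 := stepA (sS+1) (1/K) (by linarith) (by positivity)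
          (houtS _ (lt_add_one sS)) (houtT _ (lt_of_le_of_lt hle (by positivity)))
        have hfac : (1+1/K)/(1/K) = K + 1 := by field_simp
        have hsec : (1:ℝ) ≤ (1+(sS+1))/(sS+1) := by
          rw [le_div_iff₀ (by linarith)]; linarith
        rw [hfac] at h1
        have hmul := mul_le_mul_of_nonneg_right hsec (by linarith : (0:ℝ) ≤ K+1)
        rw [one_mul] at hmul
        linarith
      have stepC : ((1+sS)/sS) * ((1+tS)/tS) ≤ K := by
        have hev : ∀ᶠ ε in nhdsWithin (0:ℝ) (Set.Ioi 0),
            ((1+(sS+ε))/(sS+ε)) * ((1+(tS+ε))/(tS+ε)) ≤ K := by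
          filter_upwards [self_mem_nhdsWithin] with ε hε
          have hε' : (0:ℝ) < ε := hε
          exact stepA (sS+ε) (tS+ε) (by linarith) (by linarith)
            (houtS _ (by linarith)) (houtT _ (by linarith))
        have hcont : ContinuousAt
            (fun ε : ℝ => ((1+(sS+ε))/(sS+ε)) * ((1+(tS+ε))/(tS+ε))) 0 := by
          apply ContinuousAt.mul
          · exact ContinuousAt.div (by fun_prop) (by fun_prop)
              (by simpa using ne_of_gt hspos)
          · exact ContinuousAt.div (by fun_prop) (by fun_prop)
              (by simpa using ne_of_gt htpos)
        have htend := hcont.tendsto.mono_left (nhdsWithin_le_nhds (s := Set.Ioi (0:ℝ)))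
        have hfin3 := le_of_tendsto htend hev
        simpa using hfin3
      have hsin : p + sS • (p - q) ∈ closure C₀ := hsmem.2
      have htin : q + tS • (q - p) ∈ closure C₀ := htmem.2
      clear hsmem htmem hS0 hT0 hSbdd hTbdd
      clear_value sS tS
      clear_value Sset Tset
      clear hsSdef htSdef hSsetdef hTsetdef Sset Tset
      -- Step D
      have hDDpos : (0:ℝ) < 1 + sS + tS := by linarith
      have hDDne : (1 + sS + tS : ℝ) ≠ 0 := ne_of_gt hDDpos
      have hsne : sS ≠ 0 := ne_of_gt hspos
      have htne : tS ≠ 0 := ne_of_gt htpos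
      set u := p + sS • (p - q) with hudef
      set v := q + tS • (q - p) with hvdef
      set c₁ : ℝ := sS / (1 + sS + tS) with hc₁def
      set c₂ : ℝ := (sS + 1) / (1 + sS + tS) with hc₂def
      have huclo : u ∈ closure C₀ := hsin
      have hvclo : v ∈ closure C₀ := htin
      have hfu : f₀ u = 1 := hclf u huclo
      have hfv : f₀ v = 1 := hclf v hvclo
      have hc₁pos : 0 < c₁ := by rw [hc₁def]; positivity
      have hc₂pos : 0 < c₂ := by rw [hc₂def]; positivity
      have hc₁₂ : c₁ < c₂ := by
        rw [hc₁def, hc₂def, div_lt_div_iff₀ hDDpos hDDpos]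
        nlinarith
      have hc₂lt : c₂ < 1 := by
        rw [hc₂def, div_lt_one hDDpos]; linarith
      have hW2f : ∀ r : ℝ, f₀ ((1-r) • u + r • v) = 1 := by
        intro r
        rw [map_add, _root_.map_smul, _root_.map_smul, smul_eq_mul, smul_eq_mul, hfu, hfv]
        ring
      have hW2ne : ∀ r : ℝ, (1-r) • u + r • v ≠ 0 := by
        intro r h0
        have := hW2f r; rw [h0, map_zero] at this; norm_num at this
      have hid1 : (1-c₁) • u + c₁ • v = p := by
        rw [hudef, hvdef, hc₁def]
        match_scalars <;> (field_simp; ring)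
      have hid2 : (1-c₂) • u + c₂ • v = q := by
        rw [hudef, hvdef, hc₂def]
        match_scalars <;> (field_simp; ring)
      have hxeq : x = Projectivization.mk ℝ ((1-c₁) • u + c₁ • v) (hW2ne c₁) := by
        rw [mk_congr (hW2ne c₁) hid1]
        exact (mk_chart f₀ (hcl0 x hxcl)).symm
      have hyeq : y = Projectivization.mk ℝ ((1-c₂) • u + c₂ • v) (hW2ne c₂) := by
        rw [mk_congr (hW2ne c₂) hid2]
        exact (mk_chart f₀ (hcl0 y hycl)).symm
      have husub : openSegV u v ⊆ closure Ω :=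
        openSegV_subset_closure hclconv hclmk huclo hvclo
      have hseg : ∀ r ∈ Set.Ioo (0:ℝ) 1,
          Projectivization.mk ℝ ((1-r) • u + r • v) (hW2ne r) ∈ face Ω x := by
        intro r hr
        have hwmem : (1-r) • u + r • v ∈ closure C₀ :=
          hclconv huclo hvclo (by linarith [hr.2]) (le_of_lt hr.1) (by ring)
        refine Set.mem_insert_iff.2 (Or.inr ⟨hclmk _ (hW2ne r) hwmem, u, v, husub, ?_, ?_⟩)
        · exact ⟨1-c₁, c₁, by linarith, hc₁pos, hW2ne c₁, hxeq⟩
        · exact ⟨1-r, r, by linarith [hr.2], hr.1, hW2ne r, rfl⟩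
      have hyface : y ∈ face Ω x := by
        rw [hyeq]; exact hseg c₂ ⟨hc₂pos, hc₂lt⟩
      have hbound := crossSet_le_of_seg u v hW2ne hc₁pos (le_of_lt hc₁₂) hc₂lt hxeq hyeq hseg
      clear_value u v c₁ c₂
      have hbv : ((1-c₁) * c₂) / ((1-c₂) * c₁) = ((1+sS)/sS) * ((1+tS)/tS) := by
        rw [hc₁def, hc₂def]
        have e1 : (1:ℝ) - sS/(1+sS+tS) = (1+tS)/(1+sS+tS) := by
          rw [eq_div_iff hDDne, sub_mul, div_mul_cancel₀ _ hDDne]; ring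
        have e2 : (1:ℝ) - (sS+1)/(1+sS+tS) = tS/(1+sS+tS) := by
          rw [eq_div_iff hDDne, sub_mul, div_mul_cancel₀ _ hDDne]; ring
        rw [e1, e2, div_mul_div_comm, div_mul_div_comm, div_div_div_cancel_right₀]
        · rw [div_mul_div_comm, div_eq_div_iff (by positivity) (by positivity)]
          ring
        · positivity
      have hboundK : ∀ r ∈ crossSet (face Ω x) x y, r ≤ K := by
        intro r hr
        calc r ≤ ((1-c₁) * c₂) / ((1-c₂) * c₁) := hbound r hr
          _ = ((1+sS)/sS) * ((1+tS)/tS) := hbv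
          _ ≤ K := stepC
      have hsupface : sSup (crossSet (face Ω x) x y) ≤ K :=
        Real.sSup_le hboundK (le_of_lt hKpos)
      have h1face : (1:ℝ) ≤ sSup (crossSet (face Ω x) x y) :=
        le_csSup ⟨K, fun r hr => hboundK r hr⟩
          (one_mem_crossSet f₀ hface0 (hcl0 x hxcl) (hcl0 y hycl))
      refine ⟨hyface, ?_⟩
      show (1/2 : ℝ) * Real.log (sSup (crossSet (face Ω x) x y)) ≤ M
      have hlog : Real.log (sSup (crossSet (face Ω x) x y)) ≤ 2*M := by
        calc Real.log (sSup (crossSet (face Ω x) x y)) ≤ Real.log K :=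
            Real.log_le_log (by linarith) hsupface
          _ = 2*M := hlogK
      linarith
  constructor
  · obtain ⟨Mr, hMr⟩ : ∃ M : ℝ, L < (M : EReal) := by
      refine ⟨L.toReal + 1, ?_⟩
      have hLne : L ≠ ⊤ := ne_of_lt hfin
      have hLneb : L ≠ ⊥ := by
        intro h
        rw [h] at hL0
        exact absurd hL0 (by norm_num)
      conv_lhs => rw [← EReal.coe_toReal hLne hLneb]
      exact_mod_cast lt_add_one L.toReal
    exact (key Mr hMr).1
  · by_contra hcon
    push_neg at hcon
    obtain ⟨z, hz1, hz2⟩ := exists_between hcon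
    have hzt : z ≠ ⊤ := ne_top_of_lt hz2
    have hzb : z ≠ ⊥ := by
      intro h
      rw [h] at hz1
      exact absurd (lt_of_le_of_lt hL0 hz1) (by norm_num)
    have hkey := (key z.toReal (by rwa [EReal.coe_toReal hzt hzb])).2
    have hle : (hilbertDist (face Ω x) x y : EReal) ≤ z := by
      rw [← EReal.coe_toReal hzt hzb]
      exact_mod_cast hkey
    exact absurd hz2 (not_lt.2 hle)
end CCProj
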